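/- Fix 0 < θ < 1. Let n̂_1 ≥ n̂_2 ≥ ... ≥ n̂_N (N ≥ 2) be positive integers with n̂_1 ≤ Σ_{l≥2} n̂_l. Then Σ_{l=1}^N n̂_l^θ ≥ 2·n̂_1^θ + (2 - 2^θ)·Σ_{l≥3} n̂_l^θ. -/

import Mathlib

open Real Finset

lemma keyderiv (θ y : ℝ) (hθ : 0 < θ) (hθ1 : θ < 1) (hy : 0 < y) (t : ℝ) (ht : y < t) :
    HasDerivAt (fun t : ℝ => (t + y) ^ θ - t ^ θ)
      (1 * θ * (t + y) ^ (θ - 1) - 1 * θ * t ^ (θ - 1)) t := by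
  have h1 : HasDerivAt (fun t : ℝ => t + y) 1 t := (hasDerivAt_id t).add_const y
  have h2 : HasDerivAt (fun t : ℝ => (t + y) ^ θ) (1 * θ * (t + y) ^ (θ - 1)) t :=
    h1.rpow_const (Or.inl (by nlinarith))
  have h3 : HasDerivAt (fun t : ℝ => t ^ θ) (1 * θ * t ^ (θ - 1)) t :=
    (hasDerivAt_id t).rpow_const (Or.inl (by simpa using (hy.trans ht).ne'))
  exact h2.sub h3

lemma key (θ : ℝ) (hθ : 0 < θ) (hθ1 : θ < 1) (x y : ℝ) (hy : 0 ≤ y) (hxy : y ≤ x) :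
    (x + y) ^ θ ≤ x ^ θ + (2 ^ θ - 1) * y ^ θ := by
  rcases eq_or_lt_of_le hy with h0 | hy
  · rw [← h0]; simp [Real.zero_rpow hθ.ne']
  have hanti : AntitoneOn (fun t : ℝ => (t + y) ^ θ - t ^ θ) (Set.Ici y) := by
    apply antitoneOn_of_deriv_nonpos (convex_Ici y)
    · apply Continuous.continuousOn
      exact ((Real.continuous_rpow_const hθ.le).comp (continuous_id.add continuous_const)).sub
        (Real.continuous_rpow_const hθ.le)
    · rw [interior_Ici]
      intro t ht
      exact (keyderiv θ y hθ hθ1 hy t ht).differentiableAt.differentiableWithinAt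
    · rw [interior_Ici]
      intro t ht
      rw [(keyderiv θ y hθ hθ1 hy t ht).deriv]
      have h4 : (t + y) ^ (θ - 1) ≤ t ^ (θ - 1) :=
        Real.rpow_le_rpow_of_nonpos (hy.trans ht) (by linarith) (by linarith)
      nlinarith
  have := hanti (Set.self_mem_Ici) (Set.mem_Ici.mpr hxy) hxy
  have h2y : (y + y) ^ θ = 2 ^ θ * y ^ θ := by
    rw [← Real.mul_rpow (by norm_num) hy.le]; ring_nf
  simp only at this
  nlinarith [this]

lemma sumlem (θ : ℝ) (hθ : 0 < θ) (hθ1 : θ < 1) (b : ℝ) (hb : 0 ≤ b)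
    {ι : Type*} (s : Finset ι) (f : ι → ℝ) (hf : ∀ i ∈ s, 0 ≤ f i) (hfb : ∀ i ∈ s, f i ≤ b) :
    (b + ∑ i ∈ s, f i) ^ θ ≤ b ^ θ + (2 ^ θ - 1) * ∑ i ∈ s, (f i) ^ θ := by
  classical
  induction s using Finset.induction with
  | empty => simp
  | @insert a s ha ih =>
    rw [Finset.sum_insert ha, Finset.sum_insert ha]
    have hs0 : (0:ℝ) ≤ ∑ i ∈ s, f i :=
      Finset.sum_nonneg fun i hi => hf i (Finset.mem_insert_of_mem hi)
    have h1 : (b + (f a + ∑ i ∈ s, f i)) ^ θ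
        ≤ (b + ∑ i ∈ s, f i) ^ θ + (2 ^ θ - 1) * (f a) ^ θ := by
      have := key θ hθ hθ1 (b + ∑ i ∈ s, f i) (f a)
        (hf a (Finset.mem_insert_self a s))
        (le_trans (hfb a (Finset.mem_insert_self a s)) (by linarith))
      have e : b + (f a + ∑ i ∈ s, f i) = b + ∑ i ∈ s, f i + f a := by ring
      rw [e]; exact this
    have h2 := ih (fun i hi => hf i (Finset.mem_insert_of_mem hi))
      (fun i hi => hfb i (Finset.mem_insert_of_mem hi))
    linarith

theorem stmt1 (θ : ℝ) (hθ : 0 < θ) (hθ1 : θ < 1) (N : ℕ) (hN : 2 ≤ N)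
    (n : Fin N → ℕ) (hpos : ∀ l, 0 < n l) (hmono : Antitone n)
    (h1 : n ⟨0, by omega⟩ ≤ ∑ l ∈ Finset.univ.filter (fun l : Fin N => 1 ≤ l.val), n l) :
    2 * (n ⟨0, by omega⟩ : ℝ) ^ θ
      + (2 - 2 ^ θ) * ∑ l ∈ Finset.univ.filter (fun l : Fin N => 2 ≤ l.val), (n l : ℝ) ^ θ
      ≤ ∑ l, (n l : ℝ) ^ θ := by
  set i0 : Fin N := ⟨0, by omega⟩
  set i1 : Fin N := ⟨1, by omega⟩
  set A : Finset (Fin N) := Finset.univ.filter (fun l : Fin N => 2 ≤ l.val) with hA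
  have hi0A : i0 ∉ A := by simp [hA, i0]
  have hi1A : i1 ∉ A := by simp [hA, i1]
  have hsplit1 : Finset.univ.filter (fun l : Fin N => 1 ≤ l.val) = insert i1 A := by
    ext l
    simp only [Finset.mem_filter, Finset.mem_univ, true_and, Finset.mem_insert, hA]
    constructor
    · intro h
      rcases eq_or_lt_of_le h with h' | h'
      · left; exact Fin.ext h'.symm
      · right; omega
    · rintro (rfl | h)
      · exact le_refl 1
      · omega
  have hsplit2 : (Finset.univ : Finset (Fin N)) = insert i0 (insert i1 A) := by
    ext l
    simp only [Finset.mem_univ, Finset.mem_insert, true_iff, hA, Finset.mem_filter,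
      Finset.mem_univ, true_and]
    by_cases h : l.val = 0
    · left; exact Fin.ext h
    · by_cases h' : l.val = 1
      · right; left; exact Fin.ext h'
      · right; right; omega
  have hi0i1 : i0 ∉ insert i1 A := by
    simp only [Finset.mem_insert]
    push_neg
    exact ⟨by simp [i0, i1, Fin.ext_iff], hi0A⟩
  -- the key inequality: (n i0)^θ ≤ (n i1)^θ + (2^θ - 1) * ∑_{A} (n l)^θ
  have hS : (n i0 : ℝ) ≤ (n i1 : ℝ) + ∑ l ∈ A, (n l : ℝ) := by
    have := h1
    rw [hsplit1, Finset.sum_insert hi1A] at this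
    push_cast [← Nat.cast_sum]
    exact_mod_cast this
  have hkey : (n i0 : ℝ) ^ θ ≤ (n i1 : ℝ) ^ θ + (2 ^ θ - 1) * ∑ l ∈ A, (n l : ℝ) ^ θ := by
    have hmain := sumlem θ hθ hθ1 (n i1 : ℝ) (by positivity) A (fun l => (n l : ℝ))
      (fun i _ => by positivity)
      (fun i hi => by
        have h2i : 2 ≤ i.val := by simpa [hA] using hi
        have hle : i1 ≤ i := by
          rw [Fin.le_def]
          simpa [i1] using by omega
        have : n i ≤ n i1 := hmono hle
        show (n i : ℝ) ≤ (n i1 : ℝ)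
        exact_mod_cast this)
    calc (n i0 : ℝ) ^ θ ≤ ((n i1 : ℝ) + ∑ l ∈ A, (n l : ℝ)) ^ θ := by
          apply Real.rpow_le_rpow (by positivity) hS hθ.le
      _ ≤ (n i1 : ℝ) ^ θ + (2 ^ θ - 1) * ∑ l ∈ A, (n l : ℝ) ^ θ := hmain
  have hAnn : (0:ℝ) ≤ ∑ l ∈ A, (n l : ℝ) ^ θ :=
    Finset.sum_nonneg fun i _ => by positivity
  rw [hsplit2, Finset.sum_insert hi0i1, Finset.sum_insert hi1A]
  linarith
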